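/- Let F_n(·|δ²) be the distribution function of χ²_n(δ²) and 0 < u < 1/2. Then F_n^{-1}(u | δ²) ≥ n + δ² − √((4n + 8δ²)·log(1/u)). -/

import Mathlib

open MeasureTheory ProbabilityTheory Finset Real
open scoped NNReal ENNReal

/-- The noncentral chi-squared distribution `χ²_n(δ²)` with `δ² = ∑ i, δ i ^ 2`,
realized as the law of `∑ i, (Z i + δ i)^2` for i.i.d. standard Gaussians `Z i`. -/
noncomputable def noncentralChiSq (n : ℕ) (δ : Fin n → ℝ) : Measure ℝ :=
  Measure.map (fun x => ∑ i, (x i + δ i) ^ 2)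
    (Measure.pi fun _ : Fin n => gaussianReal 0 1)

/-- The distribution function of `χ²_n(δ²)`. -/
noncomputable def noncentralChiSqCDF (n : ℕ) (δ : Fin n → ℝ) (t : ℝ) : ℝ :=
  (noncentralChiSq n δ (Set.Iic t)).toReal

/-- The p-quantile of `χ²_n(δ²)`. -/
noncomputable def noncentralChiSqQuantile (n : ℕ) (δ : Fin n → ℝ) (p : ℝ) : ℝ :=
  sInf {t : ℝ | p ≤ noncentralChiSqCDF n δ t}


-- Step A: exp (y - y^2/2) ≤ 1 + y for y ≥ 0
lemma aux_exp_le {y : ℝ} (hy : 0 ≤ y) : Real.exp (y - y^2/2) ≤ 1 + y := by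
  have key : ∀ z ∈ Set.Ici (0:ℝ), 1 ≤ (1 + z) * Real.exp (z^2/2 - z) := by
    have hmono : MonotoneOn (fun z : ℝ => (1 + z) * Real.exp (z^2/2 - z)) (Set.Ici 0) := by
      apply monotoneOn_of_deriv_nonneg (convex_Ici 0)
      · fun_prop
      · fun_prop
      · intro x hx
        have hd : HasDerivAt (fun z : ℝ => (1 + z) * Real.exp (z^2/2 - z))
            (x^2 * Real.exp (x^2/2 - x)) x := by
          have h1 : HasDerivAt (fun z : ℝ => (1:ℝ) + z) 1 x := by
            simpa using (hasDerivAt_id x).const_add (1:ℝ)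
          have h2 : HasDerivAt (fun z : ℝ => z^2/2 - z) (x - 1) x := by
            have := ((hasDerivAt_pow 2 x).div_const 2).sub (hasDerivAt_id x)
            simpa [pow_one, Pi.sub_def] using this
          have h3 := (h2.exp)
          have := h1.mul h3
          simp only [Pi.mul_def] at this
          refine this.congr_deriv ?_
          ring
        rw [hd.deriv]
        have := Real.exp_pos (x^2/2 - x)
        positivity
    intro z hz
    have h0 : (fun z : ℝ => (1 + z) * Real.exp (z^2/2 - z)) 0 = 1 := by simp
    have := hmono (Set.self_mem_Ici) hz (by exact hz)
    simpa [h0] using this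
  have h := key y hy
  have he : Real.exp (y^2/2 - y) > 0 := Real.exp_pos _
  rw [← div_le_iff₀ he] at h
  calc Real.exp (y - y^2/2) = 1 / Real.exp (y^2/2 - y) := by
        rw [one_div, ← Real.exp_neg]; ring_nf
      _ ≤ 1 + y := h

-- Step B: single Gaussian integral
lemma aux_gauss_int (l d : ℝ) (hl : 0 ≤ l) :
    ∫ y, Real.exp (-(l*(y+d)^2)) ∂(gaussianReal 0 1)
      = Real.exp (-(l*d^2)/(1+2*l)) / Real.sqrt (1+2*l) := by
  have h1 : (1:ℝ≥0) ≠ 0 := one_ne_zero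
  have hg : gaussianReal 0 1 = volume.withDensity (gaussianPDF 0 1) :=
    gaussianReal_of_var_ne_zero 0 h1
  have hpdf : ∀ x : ℝ, gaussianPDF 0 1 x
      = ((fun x => (gaussianPDFReal 0 1 x).toNNReal) x : ℝ≥0∞) := fun x => rfl
  rw [hg]
  rw [show gaussianPDF 0 1 = fun x => ((fun x => (gaussianPDFReal 0 1 x).toNNReal) x : ℝ≥0∞)
      from funext hpdf]
  rw [integral_withDensity_eq_integral_smul
      ((measurable_gaussianPDFReal 0 1).real_toNNReal) _]
  have h2l : (0:ℝ) < 1 + 2*l := by linarith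
  set b : ℝ := l + 1/2 with hb
  set c : ℝ := 2*l*d/(1+2*l) with hc
  have hbpos : (0:ℝ) < b := by rw [hb]; linarith
  have hpt : ∀ x : ℝ, ((gaussianPDFReal 0 1 x).toNNReal : ℝ) • Real.exp (-(l*(x+d)^2))
      = ((Real.sqrt (2*π))⁻¹ * Real.exp (-(l*d^2)/(1+2*l))) * Real.exp (-b*(x+c)^2) := by
    intro x
    have hnn : 0 ≤ gaussianPDFReal 0 1 x := gaussianPDFReal_nonneg 0 1 x
    rw [smul_eq_mul, Real.coe_toNNReal _ hnn]
    rw [gaussianPDFReal_def]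
    simp only [NNReal.coe_one, mul_one, sub_zero]
    rw [mul_assoc, mul_assoc, ← Real.exp_add, ← Real.exp_add]
    congr 1
    rw [hb, hc]
    congr 1
    field_simp
    ring
  calc ∫ x, ((gaussianPDFReal 0 1 x).toNNReal : ℝ≥0) • Real.exp (-(l*(x+d)^2))
      = ∫ x : ℝ, ((Real.sqrt (2*π))⁻¹ * Real.exp (-(l*d^2)/(1+2*l))) * Real.exp (-b*(x+c)^2) := by
        congr 1; funext x; exact hpt x
    _ = ((Real.sqrt (2*π))⁻¹ * Real.exp (-(l*d^2)/(1+2*l))) * ∫ x : ℝ, Real.exp (-b*(x+c)^2) := by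
        rw [MeasureTheory.integral_const_mul]
    _ = ((Real.sqrt (2*π))⁻¹ * Real.exp (-(l*d^2)/(1+2*l))) * Real.sqrt (π/b) := by
        rw [show (fun x : ℝ => Real.exp (-b*(x+c)^2)) = fun x => (fun y => Real.exp (-b*y^2)) (x + c)
          from rfl]
        rw [MeasureTheory.integral_add_right_eq_self (fun y => Real.exp (-b*y^2)) c, integral_gaussian]
    _ = Real.exp (-(l*d^2)/(1+2*l)) / Real.sqrt (1+2*l) := by
        rw [mul_comm ((Real.sqrt (2*π))⁻¹) _, mul_assoc, div_eq_mul_inv]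
        congr 1
        rw [← Real.sqrt_inv, ← Real.sqrt_mul (by positivity), ← Real.sqrt_inv]
        congr 1
        have hπ : (0:ℝ) < π := Real.pi_pos
        field_simp [hb]
        ring

-- Step C0: product integral over Measure.pi
lemma aux_integral_pi {n : ℕ} (μ : Measure ℝ) [SigmaFinite μ] (f : Fin n → ℝ → ℝ) :
    ∫ x : Fin n → ℝ, ∏ i, f i (x i) ∂(Measure.pi fun _ => μ) = ∏ i, ∫ y, f i y ∂μ := by
  letI : MeasureSpace ℝ := ⟨μ⟩
  have : (Measure.pi fun _ : Fin n => μ) = (volume : Measure (Fin n → ℝ)) := by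
    rw [MeasureTheory.volume_pi]; rfl
  rw [this]
  exact MeasureTheory.integral_fintype_prod_eq_prod f

-- Step C: mgf bound
lemma aux_mgf_bound (n : ℕ) (δ : Fin n → ℝ) (l : ℝ) (hl : 0 ≤ l) :
    ∫ x : Fin n → ℝ, Real.exp (-(l * ∑ i, (x i + δ i)^2))
        ∂(Measure.pi fun _ => gaussianReal 0 1)
      ≤ Real.exp (-l * (n + ∑ i, δ i ^ 2) + l^2 * (n + 2 * ∑ i, δ i ^ 2)) := by
  have h2l : (0:ℝ) < 1 + 2*l := by linarith
  have hint : ∀ x : Fin n → ℝ, Real.exp (-(l * ∑ i, (x i + δ i)^2))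
      = ∏ i, Real.exp (-(l * (x i + δ i)^2)) := by
    intro x
    rw [← Real.exp_sum]
    congr 1
    rw [Finset.mul_sum]
    simp [Finset.sum_neg_distrib]
  calc ∫ x : Fin n → ℝ, Real.exp (-(l * ∑ i, (x i + δ i)^2))
        ∂(Measure.pi fun _ => gaussianReal 0 1)
      = ∫ x : Fin n → ℝ, ∏ i, Real.exp (-(l * (x i + δ i)^2))
        ∂(Measure.pi fun _ => gaussianReal 0 1) := by
        congr 1; funext x; exact hint x
    _ = ∏ i, ∫ y, Real.exp (-(l * (y + δ i)^2)) ∂(gaussianReal 0 1) :=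
        aux_integral_pi (gaussianReal 0 1) (fun i y => Real.exp (-(l * (y + δ i)^2)))
    _ = ∏ i, Real.exp (-(l*(δ i)^2)/(1+2*l)) / Real.sqrt (1+2*l) := by
        refine Finset.prod_congr rfl fun i _ => ?_
        exact aux_gauss_int l (δ i) hl
    _ ≤ ∏ i, Real.exp (-l * (1 + (δ i)^2) + l^2 * (1 + 2 * (δ i)^2)) := by
        refine Finset.prod_le_prod (fun i _ => by positivity) fun i _ => ?_
        have hsq : Real.exp (l - l^2) ≤ Real.sqrt (1+2*l) := by
          apply Real.le_sqrt_of_sq_le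
          have h2 : Real.exp (2*l - (2*l)^2/2) ≤ 1 + 2*l :=
            aux_exp_le (by linarith)
          calc Real.exp (l - l^2) ^ 2 = Real.exp (2*(l - l^2)) := by
                rw [show (2:ℝ)*(l-l^2) = (2:ℕ)*(l-l^2) by norm_num, Real.exp_nat_mul]
            _ = Real.exp (2*l - (2*l)^2/2) := by ring_nf
            _ ≤ 1 + 2*l := h2
        have hnum : Real.exp (-(l*(δ i)^2)/(1+2*l)) ≤ Real.exp ((-l + 2*l^2) * (δ i)^2) := by
          apply Real.exp_le_exp.2
          rw [div_le_iff₀ h2l]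
          nlinarith [sq_nonneg (δ i), sq_nonneg l, mul_nonneg (mul_nonneg hl hl) (mul_nonneg hl (sq_nonneg (δ i)))]
        calc Real.exp (-(l*(δ i)^2)/(1+2*l)) / Real.sqrt (1+2*l)
            ≤ Real.exp ((-l + 2*l^2) * (δ i)^2) / Real.exp (l - l^2) := by
              exact div_le_div₀ (Real.exp_pos _).le hnum (Real.exp_pos _) hsq
          _ = Real.exp (-l * (1 + (δ i)^2) + l^2 * (1 + 2 * (δ i)^2)) := by
              rw [← Real.exp_sub]; ring_nf
    _ = Real.exp (-l * (n + ∑ i, δ i ^ 2) + l^2 * (n + 2 * ∑ i, δ i ^ 2)) := by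
        rw [← Real.exp_sum]
        congr 1
        rw [Finset.sum_add_distrib]
        simp only [mul_add, mul_one, Finset.sum_add_distrib, Finset.sum_const, card_univ,
          Fintype.card_fin, nsmul_eq_mul, Finset.mul_sum]
        ring

-- Step D: Chernoff tail bound
lemma aux_tail (n : ℕ) (δ : Fin n → ℝ) (t : ℝ) (hv : (0:ℝ) < (n:ℝ) + 2 * ∑ i, δ i ^ 2)
    (ht : t < (n:ℝ) + ∑ i, δ i ^ 2) :
    noncentralChiSqCDF n δ t
      ≤ Real.exp (-(((n:ℝ) + ∑ i, δ i ^ 2 - t)^2 / (4 * ((n:ℝ) + 2 * ∑ i, δ i ^ 2)))) := by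
  set m : ℝ := (n:ℝ) + ∑ i, δ i ^ 2 with hm
  set v : ℝ := (n:ℝ) + 2 * ∑ i, δ i ^ 2 with hvdef
  set l : ℝ := (m - t) / (2 * v) with hldef
  have hl : 0 < l := div_pos (by linarith) (by linarith)
  set P : Measure (Fin n → ℝ) := Measure.pi fun _ => gaussianReal 0 1 with hP
  set X : (Fin n → ℝ) → ℝ := fun x => ∑ i, (x i + δ i)^2 with hX
  have hXmeas : Measurable X := by
    apply Finset.measurable_sum
    intro i _
    exact (((measurable_pi_apply (X := fun _ => ℝ) i).add_const (δ i)).pow_const 2 : Measurable fun x : Fin n → ℝ => (x i + δ i) ^ 2)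
  have hXnn : ∀ x, 0 ≤ X x := fun x => Finset.sum_nonneg fun i _ => sq_nonneg _
  have hcdf : noncentralChiSqCDF n δ t = (P {x | X x ≤ t}).toReal := by
    rw [noncentralChiSqCDF, noncentralChiSq, Measure.map_apply hXmeas measurableSet_Iic]
    rfl
  have hint : Integrable (fun ω => Real.exp (-l * X ω)) P := by
    apply Integrable.mono' (integrable_const (1:ℝ))
    · exact (Real.measurable_exp.comp (hXmeas.const_mul (-l))).aestronglyMeasurable
    · refine ae_of_all _ fun ω => ?_
      rw [Real.norm_eq_abs, abs_of_nonneg (Real.exp_nonneg _)]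
      exact Real.exp_le_one_iff.2 (by nlinarith [hXnn ω])
  have hchern := measure_le_le_exp_mul_mgf (X := X) (μ := P) t
      (by linarith : -l ≤ 0) hint
  rw [measureReal_def, ← hcdf] at hchern
  have hmgf : mgf X P (-l) ≤ Real.exp (-l * m + l^2 * v) := by
    have := aux_mgf_bound n δ l hl.le
    calc mgf X P (-l) = ∫ x, Real.exp (-(l * X x)) ∂P := by
          rw [mgf]; congr 1; funext x; simp [neg_mul]
      _ ≤ Real.exp (-l * m + l^2 * v) := by rw [hm, hvdef]; exact this
  calc noncentralChiSqCDF n δ t ≤ Real.exp (-(-l) * t) * mgf X P (-l) := hchern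
    _ ≤ Real.exp (-(-l) * t) * Real.exp (-l * m + l^2 * v) := by
        exact mul_le_mul_of_nonneg_left hmgf (Real.exp_nonneg _)
    _ = Real.exp (l * t - l * m + l^2 * v) := by
        rw [← Real.exp_add]; ring_nf
    _ = Real.exp (-((m - t)^2 / (4 * v))) := by
        congr 1
        rw [hldef]
        field_simp
        ring

theorem stmt_9 (n : ℕ) (hn : 1 ≤ n) (δ : Fin n → ℝ) (δsq : ℝ)
    (hδ : δsq = ∑ i, δ i ^ 2) (u : ℝ) (hu0 : 0 < u) (hu : u < 1 / 2) :
    noncentralChiSqQuantile n δ u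
      ≥ n + δsq - Real.sqrt ((4 * n + 8 * δsq) * Real.log u⁻¹) := by
  have hδsq : 0 ≤ δsq := hδ ▸ Finset.sum_nonneg fun i _ => sq_nonneg _
  have hn1 : (1:ℝ) ≤ (n:ℝ) := by exact_mod_cast hn
  have hv : (0:ℝ) < (n:ℝ) + 2 * δsq := by linarith
  have hL : 0 < Real.log u⁻¹ := Real.log_pos (by
    rw [lt_inv_comm₀ one_pos hu0]; linarith)
  set L : ℝ := Real.log u⁻¹ with hLdef
  set s : ℝ := Real.sqrt ((4 * n + 8 * δsq) * L) with hsdef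
  have hsnn : 0 ≤ s := Real.sqrt_nonneg _
  have hs2 : s^2 = (4 * n + 8 * δsq) * L :=
    Real.sq_sqrt (by positivity)
  rw [ge_iff_le]
  unfold noncentralChiSqQuantile
  apply le_csInf
  · -- nonempty
    have hXmeas : Measurable (fun x : Fin n → ℝ => ∑ i, (x i + δ i)^2) := by
      apply Finset.measurable_sum
      intro i _
      exact (((measurable_pi_apply (X := fun _ => ℝ) i).add_const (δ i)).pow_const 2 : Measurable fun x : Fin n → ℝ => (x i + δ i) ^ 2)
    haveI hprob : IsProbabilityMeasure (noncentralChiSq n δ) := by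
      rw [noncentralChiSq]
      exact Measure.isProbabilityMeasure_map hXmeas.aemeasurable
    have htend : Filter.Tendsto (fun t => noncentralChiSqCDF n δ t)
        Filter.atTop (nhds 1) := by
      have h1 := MeasureTheory.tendsto_measure_Iic_atTop (μ := noncentralChiSq n δ)
      rw [measure_univ] at h1
      have h2 := (ENNReal.tendsto_toReal (by norm_num : (1:ℝ≥0∞) ≠ ⊤)).comp h1
      simpa [noncentralChiSqCDF, Function.comp_def] using h2
    have hev : ∀ᶠ t in Filter.atTop, u ≤ noncentralChiSqCDF n δ t :=
      htend.eventually (eventually_ge_nhds (by linarith : u < 1))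
    obtain ⟨t, ht⟩ := hev.exists
    exact ⟨t, ht⟩
  · intro tt htt
    by_contra hlt
    push_neg at hlt
    have htm : tt < (n:ℝ) + δsq := by linarith
    have h1 := aux_tail n δ tt (by rw [← hδ]; exact hv) (by rw [← hδ]; exact htm)
    rw [← hδ] at h1
    have hkey : ((n:ℝ) + δsq - tt)^2 / (4 * ((n:ℝ) + 2 * δsq)) > L := by
      have hgt : s < (n:ℝ) + δsq - tt := by linarith
      have hsq : s^2 < ((n:ℝ) + δsq - tt)^2 := by nlinarith
      rw [gt_iff_lt, lt_div_iff₀ (by linarith)]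
      nlinarith [hs2]
    have h2 : Real.exp (-(((n:ℝ) + δsq - tt)^2 / (4 * ((n:ℝ) + 2 * δsq)))) < u := by
      have : Real.exp (-(((n:ℝ) + δsq - tt)^2 / (4 * ((n:ℝ) + 2 * δsq)))) < Real.exp (-L) :=
        Real.exp_lt_exp.2 (by linarith)
      have hu' : Real.exp (-L) = u := by
        rw [hLdef, Real.log_inv, neg_neg, Real.exp_log hu0]
      linarith
    have h3 := le_trans htt h1
    linarith
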